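/- Theorem 2 (convergence of the projected stochastic subgradient method in probability): Let D : ℝ → ℝ be a convex function with a unique minimizer λ* over [0, ∞), and let M > 0. On a probability space with a filtration (F_t)_{t≥1}, let (λ(t))_{t≥1} be real random variables with λ(1) = 0 and each λ(t) measurable with respect to F_t, and let (G_t)_{t≥1} be real random variables with each G_t measurable with respect to F_{t+1}, |G_t| ≤ M almost surely, and such that the conditional expectation E[G_t | F_t] is almost surely a subgradient of D at λ(t). Let (h_t)_{t≥1} be nonnegative step sizes with Σ_{t=1}^∞ h_t = ∞ and Σ_{t=1}^∞ h_t² < ∞, and suppose λ(t+1) = max(λ(t) − h_t · G_t, 0) for all t. Then λ(t) converges to λ* in probability as t → ∞. -/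

import Mathlib

open Finset Filter MeasureTheory ProbabilityTheory

lemma convex_push {D : ℝ → ℝ} (hconv : ConvexOn ℝ Set.univ D) {x y z : ℝ}
    (hxy : x < y) (hyz : y ≤ z) (hD : D x ≤ D y) : D y ≤ D z := by
  rcases eq_or_lt_of_le hyz with rfl | hyz
  · exact le_rfl
  · have hxz : x < z := hxy.trans hyz
    have h1 : (0:ℝ) ≤ (z - y)/(z - x) := by
      apply div_nonneg <;> linarith
    have h2 : 0 < (y - x)/(z - x) := by
      apply div_pos <;> linarith
    have hne : z - x ≠ 0 := by linarith
    have h3 : (z - y)/(z - x) + (y - x)/(z - x) = 1 := by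
      rw [← add_div, show z - y + (y - x) = z - x by ring, div_self hne]
    have h4 := hconv.2 (Set.mem_univ x) (Set.mem_univ z) h1 h2.le h3
    have h5 : ((z - y)/(z - x)) • x + ((y - x)/(z - x)) • z = y := by
      simp only [smul_eq_mul]; field_simp; ring
    rw [h5] at h4
    simp only [smul_eq_mul] at h4
    have h7 : (z - y)/(z - x) * D y + (y - x)/(z - x) * D y = D y := by
      rw [← add_mul, h3, one_mul]
    have h8 : (y - x)/(z - x) * D y ≤ (y - x)/(z - x) * D z := by
      linarith [mul_le_mul_of_nonneg_left hD h1]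
    exact le_of_mul_le_mul_left h8 h2

lemma convex_push' {D : ℝ → ℝ} (hconv : ConvexOn ℝ Set.univ D) {x y z : ℝ}
    (hxy : y < x) (hyz : z ≤ y) (hD : D x ≤ D y) : D y ≤ D z := by
  rcases eq_or_lt_of_le hyz with rfl | hyz
  · exact le_rfl
  · have hxz : z < x := hyz.trans hxy
    have hne : x - z ≠ 0 := by intro hc; linarith [sub_eq_zero.1 hc]
    have h1 : (0:ℝ) ≤ (y - z)/(x - z) := by
      apply div_nonneg <;> linarith
    have h2 : 0 < (x - y)/(x - z) := by
      apply div_pos <;> linarith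
    have h3 : (x - y)/(x - z) + (y - z)/(x - z) = 1 := by
      rw [← add_div]
      rw [show x - y + (y - z) = x - z by ring, div_self hne]
    have h4 := hconv.2 (Set.mem_univ z) (Set.mem_univ x) h2.le h1 h3
    have h5 : ((x - y)/(x - z)) • z + ((y - z)/(x - z)) • x = y := by
      simp only [smul_eq_mul]; field_simp; ring
    rw [h5] at h4
    simp only [smul_eq_mul] at h4
    have h8 : (x - y)/(x - z) * D y ≤ (x - y)/(x - z) * D z := by
      have h7 : (x - y)/(x - z) * D y + (y - z)/(x - z) * D y = D y := by
        rw [← add_mul, h3, one_mul]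
      linarith [mul_le_mul_of_nonneg_left hD h1]
    exact le_of_mul_le_mul_left h8 h2

lemma exists_delta {D : ℝ → ℝ} (hconv : ConvexOn ℝ Set.univ D) {lamStar : ℝ}
    (hstar : 0 ≤ lamStar)
    (hmin : ∀ lam : ℝ, 0 ≤ lam → lam ≠ lamStar → D lamStar < D lam) {e : ℝ} (he : 0 < e) :
    ∃ δ > 0, ∀ l, 0 ≤ l → e ≤ |l - lamStar| → D lamStar + δ ≤ D l := by
  have hup : D lamStar < D (lamStar + e) := hmin _ (by linarith) (by intro hc; linarith)
  have hright : ∀ l, lamStar + e ≤ l → D (lamStar + e) ≤ D l := by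
    intro l hl
    exact convex_push hconv (by linarith) hl hup.le
  by_cases hcase : e ≤ lamStar
  · have hdown : D lamStar < D (lamStar - e) := hmin _ (by linarith) (by intro hc; linarith)
    refine ⟨min (D (lamStar + e) - D lamStar) (D (lamStar - e) - D lamStar),
      lt_min (by linarith) (by linarith), ?_⟩
    intro l hl hle
    rcases le_abs.1 hle with h1 | h1
    · have := hright l (by linarith)
      have := min_le_left (D (lamStar + e) - D lamStar) (D (lamStar - e) - D lamStar)
      linarith
    · have hll : l ≤ lamStar - e := by linarith
      have := convex_push' hconv (show lamStar - e < lamStar by linarith) hll hdown.le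
      have := min_le_right (D (lamStar + e) - D lamStar) (D (lamStar - e) - D lamStar)
      linarith
  · refine ⟨D (lamStar + e) - D lamStar, by linarith, ?_⟩
    intro l hl hle
    rcases le_abs.1 hle with h1 | h1
    · have := hright l (by linarith)
      linarith
    · exfalso; push_neg at hcase; linarith

/-- `g` is a subgradient of `D` at `lam`: `D(λ') ≥ D(λ) + g (λ' - λ)` for all `λ'`. -/
def IsSubgradientAt (D : ℝ → ℝ) (g lam : ℝ) : Prop :=
  ∀ lam' : ℝ, D lam' ≥ D lam + g * (lam' - lam)

set_option maxHeartbeats 1000000 in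
theorem projected_stochastic_subgradient_convergence_in_probability
    {Ω : Type*} [mΩ : MeasurableSpace Ω] (μ : Measure Ω) [IsProbabilityMeasure μ]
    (D : ℝ → ℝ) (hconv : ConvexOn ℝ Set.univ D)
    (lamStar : ℝ) (hstar : 0 ≤ lamStar)
    (hmin : ∀ lam : ℝ, 0 ≤ lam → lam ≠ lamStar → D lamStar < D lam)
    (M : ℝ) (hM : 0 < M)
    (F : Filtration ℕ mΩ)
    (lam G : ℕ → Ω → ℝ)
    (hinit : ∀ ω, lam 1 ω = 0)
    (hlam_meas : ∀ t, Measurable[F t] (lam t))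
    (hG_meas : ∀ t, Measurable[F (t + 1)] (G t))
    (hG_bound : ∀ t, ∀ᵐ ω ∂μ, |G t ω| ≤ M)
    (hG_subgrad : ∀ t, ∀ᵐ ω ∂μ, IsSubgradientAt D ((μ[G t | F t]) ω) (lam t ω))
    (h : ℕ → ℝ) (hpos : ∀ t, 0 ≤ h t)
    (hdiv : Tendsto (fun n => ∑ t ∈ Finset.Icc 1 n, h t) atTop atTop)
    (hsq : Summable (fun t => h t ^ 2))
    (hrec : ∀ t ≥ 1, ∀ ω, lam (t + 1) ω = max (lam t ω - h t * G t ω) 0) :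
    ∀ ε > 0, Tendsto (fun t => μ {ω | |lam t ω - lamStar| > ε}) atTop (nhds 0) := by
  have hFle : ∀ t, F t ≤ mΩ := fun t => F.le t
  have hlamM : ∀ t, Measurable (lam t) := fun t => (hlam_meas t).mono (hFle t) le_rfl
  have hGM : ∀ t, Measurable (G t) := fun t => (hG_meas t).mono (hFle (t+1)) le_rfl
  have hDcont : Continuous D := by
    rw [← continuousOn_univ]
    exact hconv.continuousOn isOpen_univ
  have haeG : ∀ᵐ ω ∂μ, ∀ t, |G t ω| ≤ M := ae_all_iff.2 hG_bound
  -- pathwise bounds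
  have hbd : ∀ᵐ ω ∂μ, ∀ t, 1 ≤ t →
      0 ≤ lam t ω ∧ lam t ω ≤ M * ∑ s ∈ Finset.Ico 1 t, h s := by
    filter_upwards [haeG] with ω hω
    intro t ht
    induction t, ht using Nat.le_induction with
    | base => simp [hinit ω]
    | succ t ht ih =>
      have hrt := hrec t ht ω
      have h1 : |G t ω| ≤ M := hω t
      have h2 := hpos t
      constructor
      · rw [hrt]; exact le_max_right _ _
      · rw [hrt, Finset.sum_Ico_succ_top (by omega : 1 ≤ t)]
        apply max_le
        · nlinarith [neg_abs_le (G t ω), le_abs_self (G t ω), ih.1, ih.2]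
        · nlinarith [ih.1, ih.2]
  -- integrability
  have hIntD : ∀ t, 1 ≤ t → Integrable (fun ω => D (lam t ω)) μ := by
    intro t ht
    obtain ⟨K, hK⟩ := (isCompact_Icc (a := (0:ℝ))
      (b := M * ∑ s ∈ Finset.Ico 1 t, h s)).exists_bound_of_continuousOn hDcont.continuousOn
    refine Integrable.mono' (integrable_const K)
      ((hDcont.measurable.comp (hlamM t)).aestronglyMeasurable) ?_
    filter_upwards [hbd] with ω hω
    exact hK _ ⟨(hω t ht).1, (hω t ht).2⟩
  have hInt_e : ∀ t, 1 ≤ t → Integrable (fun ω => (lam t ω - lamStar)^2) μ := by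
    intro t ht
    refine Integrable.mono' (integrable_const ((M * ∑ s ∈ Finset.Ico 1 t, h s + |lamStar|)^2))
      (((hlamM t).sub measurable_const).pow_const 2).aestronglyMeasurable ?_
    filter_upwards [hbd] with ω hω
    have h1 := (hω t ht).1
    have h2 := (hω t ht).2
    rw [Real.norm_eq_abs, abs_of_nonneg (sq_nonneg _)]
    nlinarith [le_abs_self lamStar, neg_abs_le lamStar, abs_nonneg lamStar]
  have hInt_f : ∀ t, 1 ≤ t → Integrable (fun ω => (lam t ω - lamStar) * G t ω) μ := by
    intro t ht
    refine Integrable.mono' (integrable_const ((M * ∑ s ∈ Finset.Ico 1 t, h s + |lamStar|) * M))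
      (((hlamM t).sub measurable_const).mul (hGM t)).aestronglyMeasurable ?_
    filter_upwards [hbd, haeG] with ω hω hG
    have h1 := (hω t ht).1
    have h2 := (hω t ht).2
    have h3 := hG t
    rw [Real.norm_eq_abs, abs_mul]
    have h4 : |lam t ω - lamStar| ≤ M * ∑ s ∈ Finset.Ico 1 t, h s + |lamStar| := by
      rw [abs_sub_comm]
      refine (abs_sub _ _).trans ?_
      rw [abs_of_nonneg h1]; linarith
    have h5 : (0:ℝ) ≤ |lam t ω - lamStar| := abs_nonneg _
    exact mul_le_mul h4 h3 (abs_nonneg _) (by linarith [abs_nonneg lamStar])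
  have hIntgap : ∀ t, 1 ≤ t → Integrable (fun ω => D (lam t ω) - D lamStar) μ :=
    fun t ht => (hIntD t ht).sub (integrable_const _)
  have hDge : ∀ t, 1 ≤ t → ∀ᵐ ω ∂μ, D lamStar ≤ D (lam t ω) := by
    intro t ht
    filter_upwards [hbd] with ω hω
    rcases eq_or_ne (lam t ω) lamStar with hc | hc
    · rw [hc]
    · exact (hmin _ (hω t ht).1 hc).le
  -- key one-step inequality on sets B measurable in F t
  have key : ∀ t, 1 ≤ t → ∀ B : Set Ω, MeasurableSet[F t] B →
      ∫ ω in B, (lam (t+1) ω - lamStar)^2 ∂μ ≤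
        ∫ ω in B, (lam t ω - lamStar)^2 ∂μ
          - 2 * h t * ∫ ω in B, (D (lam t ω) - D lamStar) ∂μ + h t^2 * M^2 := by
    intro t ht B hB
    have hBm : MeasurableSet B := hFle t B hB
    haveI : SigmaFinite (μ.trim (hFle t)) := by infer_instance
    -- pointwise inequality
    have hpt : ∀ᵐ ω ∂μ, (lam (t+1) ω - lamStar)^2 ≤
        (lam t ω - lamStar)^2 - 2*h t*((lam t ω - lamStar) * G t ω) + h t^2*M^2 := by
      filter_upwards [haeG] with ω hω
      have hG1 : |G t ω| ≤ M := hω t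
      have hG2 : (G t ω)^2 ≤ M^2 := by
        nlinarith [abs_nonneg (G t ω), sq_abs (G t ω), neg_abs_le (G t ω), le_abs_self (G t ω)]
      have habs : (max (lam t ω - h t * G t ω) 0 - lamStar)^2
          ≤ (lam t ω - h t * G t ω - lamStar)^2 := by
        rcases le_or_gt 0 (lam t ω - h t * G t ω) with hu | hu
        · rw [max_eq_left hu]
        · rw [max_eq_right hu.le]
          nlinarith [sq_nonneg (lam t ω - h t * G t ω)]
      rw [hrec t ht ω]
      nlinarith [habs, mul_le_mul_of_nonneg_left hG2 (sq_nonneg (h t))]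
    -- conditional expectation step
    have hXsm : StronglyMeasurable[F t] (fun ω => lam t ω - lamStar) :=
      ((hlam_meas t).sub measurable_const).stronglyMeasurable
    have hfint : Integrable ((fun ω => lam t ω - lamStar) * G t) μ := hInt_f t ht
    have hpull : μ[(fun ω => lam t ω - lamStar) * G t | F t]
        =ᵐ[μ] (fun ω => lam t ω - lamStar) * μ[G t | F t] := by
      refine condExp_mul_of_stronglyMeasurable_left hXsm hfint ?_
      refine Integrable.mono' (integrable_const M) (hGM t).aestronglyMeasurable ?_
      filter_upwards [haeG] with ω hω using hω t
    have hIcond : Integrable ((fun ω => lam t ω - lamStar) * μ[G t | F t]) μ :=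
      (integrable_condExp (f := (fun ω => lam t ω - lamStar) * G t)).congr hpull
    have hsub : ∀ᵐ ω ∂μ, D (lam t ω) - D lamStar
        ≤ ((fun ω => lam t ω - lamStar) * μ[G t | F t]) ω := by
      filter_upwards [hG_subgrad t] with ω hω
      have h1 := hω lamStar
      have h2 : (μ[G t | F t]) ω * (lamStar - lam t ω)
          = -((lam t ω - lamStar) * (μ[G t | F t]) ω) := by ring
      simp only [Pi.mul_apply]
      rw [h2] at h1
      linarith
    have hstep1 : ∫ ω in B, (D (lam t ω) - D lamStar) ∂μ
        ≤ ∫ ω in B, (lam t ω - lamStar) * G t ω ∂μ := by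
      have e1 : ∫ ω in B, (D (lam t ω) - D lamStar) ∂μ
          ≤ ∫ ω in B, ((fun ω => lam t ω - lamStar) * μ[G t | F t]) ω ∂μ :=
        setIntegral_mono_ae ((hIntgap t ht).integrableOn) (hIcond.integrableOn) hsub
      have e2 : ∫ ω in B, ((fun ω => lam t ω - lamStar) * μ[G t | F t]) ω ∂μ
          = ∫ ω in B, (μ[(fun ω => lam t ω - lamStar) * G t | F t]) ω ∂μ :=
        integral_congr_ae (ae_restrict_of_ae hpull.symm)
      have e3 : ∫ ω in B, (μ[(fun ω => lam t ω - lamStar) * G t | F t]) ω ∂μ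
          = ∫ ω in B, ((fun ω => lam t ω - lamStar) * G t) ω ∂μ :=
        setIntegral_condExp (hFle t) hfint hB
      exact e1.trans_eq (e2.trans e3)
    -- integrate pointwise inequality over B
    have hcomb : Integrable (fun ω => (lam t ω - lamStar)^2
        - 2*h t*((lam t ω - lamStar) * G t ω) + h t^2*M^2) μ :=
      ((hInt_e t ht).sub ((hInt_f t ht).const_mul _)).add (integrable_const _)
    have hmono := setIntegral_mono_ae (s := B) ((hInt_e (t+1) (by omega)).integrableOn)
      (hcomb.integrableOn) hpt
    have hexp : ∫ ω in B, ((lam t ω - lamStar)^2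
          - 2*h t*((lam t ω - lamStar) * G t ω) + h t^2*M^2) ∂μ
        = ∫ ω in B, (lam t ω - lamStar)^2 ∂μ
          - 2*h t * ∫ ω in B, (lam t ω - lamStar) * G t ω ∂μ
          + h t^2*M^2 * (μ B).toReal := by
      have ha : ∫ ω in B, ((lam t ω - lamStar)^2
            - 2*h t*((lam t ω - lamStar) * G t ω) + h t^2*M^2) ∂μ
          = (∫ ω in B, ((lam t ω - lamStar)^2 - 2*h t*((lam t ω - lamStar) * G t ω)) ∂μ)
            + ∫ _ω in B, h t^2*M^2 ∂μ :=
        integral_add (((hInt_e t ht).sub ((hInt_f t ht).const_mul _)).integrableOn)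
          (integrableOn_const (measure_ne_top μ B))
      have hb : ∫ ω in B, ((lam t ω - lamStar)^2 - 2*h t*((lam t ω - lamStar) * G t ω)) ∂μ
          = (∫ ω in B, (lam t ω - lamStar)^2 ∂μ)
            - ∫ ω in B, 2*h t*((lam t ω - lamStar) * G t ω) ∂μ :=
        integral_sub ((hInt_e t ht).integrableOn) (((hInt_f t ht).const_mul _).integrableOn)
      have hcm : ∫ ω in B, 2*h t*((lam t ω - lamStar) * G t ω) ∂μ
          = 2*h t * ∫ ω in B, (lam t ω - lamStar) * G t ω ∂μ := integral_const_mul _ _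
      have hd : ∫ _ω in B, h t^2*M^2 ∂μ = (μ B).toReal * (h t^2*M^2) := by
        rw [setIntegral_const, smul_eq_mul, measureReal_def]
      rw [ha, hb, hcm, hd]; ring
    have hμB : (μ B).toReal ≤ 1 := by
      have h1 : μ B ≤ 1 := prob_le_one
      simpa using ENNReal.toReal_mono (by norm_num) h1
    have hlast : h t^2*M^2 * (μ B).toReal ≤ h t^2*M^2 := by
      nlinarith [mul_le_mul_of_nonneg_left hμB (mul_nonneg (sq_nonneg (h t)) (sq_nonneg M))]
    have hmid : - 2*h t * ∫ ω in B, (lam t ω - lamStar) * G t ω ∂μ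
        ≤ - 2*h t * ∫ ω in B, (D (lam t ω) - D lamStar) ∂μ := by
      have := mul_le_mul_of_nonneg_left hstep1 (by linarith [hpos t] : (0:ℝ) ≤ 2 * h t)
      linarith
    rw [hexp] at hmono
    linarith
  -- expectation recursion over the whole space
  have hDge' : ∀ t, 1 ≤ t → 0 ≤ ∫ ω, (D (lam t ω) - D lamStar) ∂μ := by
    intro t ht
    refine integral_nonneg_of_ae ?_
    filter_upwards [hDge t ht] with ω hω
    simp only [Pi.zero_apply]
    linarith
  have hrecur : ∀ t, 1 ≤ t → (∫ ω, (lam (t+1) ω - lamStar)^2 ∂μ)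
      ≤ (∫ ω, (lam t ω - lamStar)^2 ∂μ)
        - 2 * h t * (∫ ω, (D (lam t ω) - D lamStar) ∂μ) + h t^2 * M^2 := by
    intro t ht
    have := key t ht Set.univ MeasurableSet.univ
    simpa [Measure.restrict_univ] using this
  have hmain : ∀ n : ℕ, (∫ ω, (lam (n+1) ω - lamStar)^2 ∂μ)
      + ∑ t ∈ Finset.Icc 1 n, (2 * h t * (∫ ω, (D (lam t ω) - D lamStar) ∂μ))
      ≤ lamStar^2 + M^2 * ∑ t ∈ Finset.Icc 1 n, h t^2 := by
    have h1 : (∫ ω, (lam 1 ω - lamStar)^2 ∂μ) = lamStar^2 := by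
      have : (fun ω => (lam 1 ω - lamStar)^2) = fun _ => lamStar^2 := by
        funext ω; rw [hinit ω]; ring
      rw [this, integral_const, probReal_univ]
      simp
    intro n
    induction n with
    | zero => simpa using h1.le
    | succ n ih =>
      rw [Finset.sum_Icc_succ_top (by omega : 1 ≤ n+1), Finset.sum_Icc_succ_top (by omega : 1 ≤ n+1)]
      have h2 := hrecur (n+1) (by omega)
      linarith
  have hCsum : ∀ n : ℕ, ∑ t ∈ Finset.Icc 1 n, (h t * (∫ ω, (D (lam t ω) - D lamStar) ∂μ))
      ≤ (lamStar^2 + M^2 * ∑' u, h u^2) / 2 := by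
    intro n
    have h2 : ∑ t ∈ Finset.Icc 1 n, h t^2 ≤ ∑' t, h t^2 :=
      hsq.sum_le_tsum _ (fun i _ => sq_nonneg _)
    have h3 : 0 ≤ ∫ ω, (lam (n+1) ω - lamStar)^2 ∂μ :=
      integral_nonneg (fun ω => sq_nonneg _)
    have h4 := hmain n
    have h5 : ∑ t ∈ Finset.Icc 1 n, (2 * h t * (∫ ω, (D (lam t ω) - D lamStar) ∂μ))
        = 2 * ∑ t ∈ Finset.Icc 1 n, (h t * (∫ ω, (D (lam t ω) - D lamStar) ∂μ)) := by
      rw [Finset.mul_sum]; congr 1; funext t; ring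
    rw [h5] at h4
    nlinarith [sq_nonneg M]
  -- existence of good times
  have hfind : ∀ κ : ℝ, 0 < κ → ∀ N, 1 ≤ N →
      ∃ t₀, N ≤ t₀ ∧ (∫ ω, (D (lam t₀ ω) - D lamStar) ∂μ) ≤ κ := by
    intro κ hκ N hN
    by_contra hcon
    push_neg at hcon
    set Csum := (lamStar^2 + M^2 * ∑' u, h u^2) / 2 with hCs
    obtain ⟨n, hn1, hn2⟩ := ((hdiv.eventually_ge_atTop
      (Csum/κ + (∑ t ∈ Finset.Icc 1 (N-1), h t) + 1)).and (eventually_ge_atTop N)).exists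
    have hsplit : ∑ t ∈ Finset.Icc 1 (N-1), h t + ∑ t ∈ Finset.Icc N n, h t
        = ∑ t ∈ Finset.Icc 1 n, h t := by
      have e1 : Finset.Icc 1 (N-1) = Finset.Ioc 0 (N-1) := by
        exact Finset.Icc_add_one_left_eq_Ioc 0 _
      have e2 : Finset.Icc N n = Finset.Ioc (N-1) n := by
        rw [← Finset.Icc_add_one_left_eq_Ioc]
        congr 1
        omega
      have e3 : Finset.Icc 1 n = Finset.Ioc 0 n := by
        exact Finset.Icc_add_one_left_eq_Ioc 0 _
      rw [e1, e2, e3]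
      exact Finset.sum_Ioc_consecutive _ (by omega) (by omega)
    have hterm : ∀ t ∈ Finset.Icc N n, h t * κ ≤ h t * (∫ ω, (D (lam t ω) - D lamStar) ∂μ) := by
      intro t htm
      have := (hcon t (Finset.mem_Icc.1 htm).1).le
      exact mul_le_mul_of_nonneg_left this (hpos t)
    have hsum1 : (∑ t ∈ Finset.Icc N n, h t) * κ
        ≤ ∑ t ∈ Finset.Icc N n, (h t * (∫ ω, (D (lam t ω) - D lamStar) ∂μ)) := by
      rw [Finset.sum_mul]
      exact Finset.sum_le_sum hterm
    have hsum2 : ∑ t ∈ Finset.Icc N n, (h t * (∫ ω, (D (lam t ω) - D lamStar) ∂μ))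
        ≤ ∑ t ∈ Finset.Icc 1 n, (h t * (∫ ω, (D (lam t ω) - D lamStar) ∂μ)) := by
      refine Finset.sum_le_sum_of_subset_of_nonneg
        (Finset.Icc_subset_Icc (by omega) le_rfl) ?_
      intro i hi _
      exact mul_nonneg (hpos i) (hDge' i (Finset.mem_Icc.1 hi).1)
    have hbig : Csum/κ + 1 ≤ ∑ t ∈ Finset.Icc N n, h t := by linarith
    have hκs := hCsum n
    have : (Csum/κ + 1) * κ ≤ Csum := by
      calc (Csum/κ + 1) * κ ≤ (∑ t ∈ Finset.Icc N n, h t) * κ :=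
            mul_le_mul_of_nonneg_right hbig hκ.le
        _ ≤ _ := hsum1
        _ ≤ _ := hsum2
        _ ≤ Csum := hκs
    rw [add_mul, div_mul_cancel₀ _ hκ.ne'] at this
    linarith
  -- tail smallness
  have htail : ∀ θ' : ℝ, 0 < θ' → ∃ N, ∀ t₀, N ≤ t₀ → ∀ m,
      ∑ u ∈ Finset.Ico t₀ m, h u^2 ≤ θ' := by
    intro θ' hθ'
    obtain ⟨s, hs⟩ := summable_iff_vanishing.1 hsq (Set.Ioo (-θ') θ')
      (Ioo_mem_nhds (by linarith) hθ')
    refine ⟨s.sup id + 1, fun t₀ ht₀ m => ?_⟩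
    have hdisj : Disjoint (Finset.Ico t₀ m) s := by
      rw [Finset.disjoint_left]
      intro a ha has
      have h1 : a ≤ s.sup id := Finset.le_sup (f := id) has
      have h2 : t₀ ≤ a := (Finset.mem_Ico.1 ha).1
      omega
    exact (hs _ hdisj).2.le
  -- MAIN assembly
  intro ε hε
  rw [ENNReal.tendsto_atTop_zero]
  intro η hη
  obtain ⟨θ, hθ, hθη⟩ : ∃ θ : ℝ, 0 < θ ∧ ENNReal.ofReal (3*θ) ≤ η := by
    rcases eq_or_ne η ⊤ with rfl | hηt
    · exact ⟨1, one_pos, le_top⟩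
    · refine ⟨η.toReal/3, div_pos (ENNReal.toReal_pos hη.ne' hηt) (by norm_num), ?_⟩
      rw [show 3*(η.toReal/3) = η.toReal by ring, ENNReal.ofReal_toReal hηt]
  obtain ⟨δ, hδ, hδprop⟩ := exists_delta hconv hstar hmin
    (show (0:ℝ) < Real.sqrt (θ*ε^2) by positivity)
  obtain ⟨N₁, hN₁⟩ := htail (θ*ε^2/M^2) (by positivity)
  obtain ⟨t₀, ht₀N, ht₀c⟩ := hfind (δ*θ) (by positivity) (max N₁ 1) (le_max_right _ _)
  have ht₀1 : 1 ≤ t₀ := le_trans (le_max_right N₁ 1) ht₀N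
  set B := {ω | (lam t₀ ω - lamStar)^2 ≤ θ*ε^2} with hBdef
  have hB : MeasurableSet[F t₀] B := by
    have hm1 : Measurable[F t₀] (fun ω => (lam t₀ ω - lamStar)^2) :=
      ((hlam_meas t₀).sub measurable_const).pow_const 2
    exact measurableSet_le hm1 measurable_const
  have hBm : MeasurableSet B := hFle t₀ B hB
  -- claim 1 : μ Bᶜ ≤ ofReal θ
  have hclaim1 : μ Bᶜ ≤ ENNReal.ofReal θ := by
    have hmono : μ Bᶜ ≤ μ {ω | δ ≤ D (lam t₀ ω) - D lamStar} := by
      apply measure_mono_ae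
      filter_upwards [hbd] with ω hω hmem
      have h0 : 0 ≤ lam t₀ ω := (hω t₀ ht₀1).1
      have h1 : θ*ε^2 < (lam t₀ ω - lamStar)^2 := by
        have : ¬ ((lam t₀ ω - lamStar)^2 ≤ θ*ε^2) := hmem
        linarith [not_le.1 this]
      have h2 : Real.sqrt (θ*ε^2) ≤ |lam t₀ ω - lamStar| := by
        rw [← Real.sqrt_sq_eq_abs]
        exact Real.sqrt_le_sqrt h1.le
      have h3 := hδprop _ h0 h2
      show δ ≤ D (lam t₀ ω) - D lamStar
      linarith
    refine hmono.trans ?_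
    have hmark := mul_meas_ge_le_integral_of_nonneg (μ := μ)
      (f := fun ω => D (lam t₀ ω) - D lamStar)
      (by filter_upwards [hDge t₀ ht₀1] with ω hω; simp only [Pi.zero_apply]; linarith)
      (hIntgap t₀ ht₀1) δ
    rw [ENNReal.le_ofReal_iff_toReal_le (measure_ne_top μ _) hθ.le]
    have h4 : δ * (μ {ω | δ ≤ D (lam t₀ ω) - D lamStar}).toReal ≤ δ * θ :=
      hmark.trans ht₀c
    nlinarith [ENNReal.toReal_nonneg (a := μ {ω | δ ≤ D (lam t₀ ω) - D lamStar})]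
  -- claim 2 : running bound on the restricted second moment
  have hclaim2 : ∀ m : ℕ, ∫ ω in B, (lam (t₀+m) ω - lamStar)^2 ∂μ
      ≤ θ*ε^2 + M^2 * ∑ u ∈ Finset.Ico t₀ (t₀+m), h u^2 := by
    intro m
    induction m with
    | zero =>
      simp only [Nat.add_zero, Finset.Ico_self, Finset.sum_empty, mul_zero, add_zero]
      have hle : ∫ ω in B, (lam t₀ ω - lamStar)^2 ∂μ ≤ ∫ _ω in B, θ*ε^2 ∂μ :=
        setIntegral_mono_on ((hInt_e t₀ ht₀1).integrableOn)
          (integrableOn_const (measure_ne_top μ B)) hBm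
          (fun ω hω => hω)
      have hconst : ∫ _ω in B, θ*ε^2 ∂μ = (μ B).toReal * (θ*ε^2) := by
        rw [setIntegral_const, smul_eq_mul, measureReal_def]
      have hμB : (μ B).toReal ≤ 1 := by
        have h1 : μ B ≤ 1 := prob_le_one
        simpa using ENNReal.toReal_mono (by norm_num) h1
      have : (μ B).toReal * (θ*ε^2) ≤ θ*ε^2 := by
        nlinarith [mul_le_mul_of_nonneg_left hμB
          (mul_nonneg hθ.le (sq_nonneg ε)), ENNReal.toReal_nonneg (a := μ B)]
      rw [hconst] at hle
      linarith
    | succ m ih =>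
      have hstep := key (t₀+m) (by omega) B (F.mono (by omega : t₀ ≤ t₀+m) B hB)
      have hgap : 0 ≤ ∫ ω in B, (D (lam (t₀+m) ω) - D lamStar) ∂μ := by
        refine setIntegral_nonneg_ae hBm ?_
        filter_upwards [hDge (t₀+m) (by omega)] with ω hω _
        linarith
      have hpos2 := hpos (t₀+m)
      have h2g := mul_le_mul_of_nonneg_left hgap
        (by linarith : (0:ℝ) ≤ 2 * h (t₀+m))
      rw [show t₀ + (m+1) = (t₀ + m) + 1 from rfl,
        Finset.sum_Ico_succ_top (by omega : t₀ ≤ t₀+m)]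
      nlinarith [hstep, ih, h2g]
  -- finish
  refine ⟨t₀, fun s hs => ?_⟩
  obtain ⟨m, rfl⟩ := Nat.exists_eq_add_of_le hs
  have hIB : ∫ ω in B, (lam (t₀+m) ω - lamStar)^2 ∂μ ≤ 2*θ*ε^2 := by
    have h2 := hN₁ t₀ (le_trans (le_max_left _ _) ht₀N) (t₀+m)
    have h3 := hclaim2 m
    have h4 : M^2 * (∑ u ∈ Finset.Ico t₀ (t₀+m), h u^2) ≤ M^2 * (θ*ε^2/M^2) :=
      mul_le_mul_of_nonneg_left h2 (sq_nonneg M)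
    have h5 : M^2 * (θ*ε^2/M^2) = θ*ε^2 := by
      field_simp
    nlinarith
  have hsubset : μ {ω | |lam (t₀+m) ω - lamStar| > ε}
      ≤ μ Bᶜ + μ ({ω | ε^2 ≤ (lam (t₀+m) ω - lamStar)^2} ∩ B) := by
    refine le_trans (measure_mono ?_) (measure_union_le _ _)
    intro ω hω
    rcases em (ω ∈ B) with hmem | hmem
    · right
      refine ⟨?_, hmem⟩
      have h1 : ε < |lam (t₀+m) ω - lamStar| := hω
      show ε^2 ≤ (lam (t₀+m) ω - lamStar)^2
      nlinarith [sq_abs (lam (t₀+m) ω - lamStar), abs_nonneg (lam (t₀+m) ω - lamStar)]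
    · left; exact hmem
  have hmark2 : μ ({ω | ε^2 ≤ (lam (t₀+m) ω - lamStar)^2} ∩ B) ≤ ENNReal.ofReal (2*θ) := by
    have hmes : MeasurableSet {ω | ε^2 ≤ (lam (t₀+m) ω - lamStar)^2} :=
      measurableSet_le measurable_const (((hlamM _).sub measurable_const).pow_const 2)
    have hkey := mul_meas_ge_le_integral_of_nonneg (μ := μ.restrict B)
      (f := fun ω => (lam (t₀+m) ω - lamStar)^2)
      (Filter.Eventually.of_forall (fun ω => by simp only [Pi.zero_apply]; positivity))
      ((hInt_e (t₀+m) (by omega)).integrableOn) (ε^2)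
    rw [measureReal_restrict_apply hmes, measureReal_def] at hkey
    rw [ENNReal.le_ofReal_iff_toReal_le (measure_ne_top μ _) (by positivity)]
    have hε2 : (0:ℝ) < ε^2 := by positivity
    nlinarith [hkey, hIB, ENNReal.toReal_nonneg
      (a := μ ({ω | ε^2 ≤ (lam (t₀+m) ω - lamStar)^2} ∩ B))]
  calc μ {ω | |lam (t₀+m) ω - lamStar| > ε}
      ≤ μ Bᶜ + μ ({ω | ε^2 ≤ (lam (t₀+m) ω - lamStar)^2} ∩ B) := hsubset
    _ ≤ ENNReal.ofReal θ + ENNReal.ofReal (2*θ) := add_le_add hclaim1 hmark2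
    _ = ENNReal.ofReal (3*θ) := by
        rw [← ENNReal.ofReal_add hθ.le (by linarith)]
        ring_nf
    _ ≤ η := hθη
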